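/- Let X be a set, σ: X → X a map, and a, b: X → ℕ finitely supported functions. Then ‖a ∧ b‖₁ ≤ ‖s₁(a) ∧ s₁(b)‖₁, where a ∧ b denotes the pointwise minimum. -/

import Mathlib

/-- ℓ¹-norm of an ℕ-valued 0-chain: `‖a‖₁ = Σ_x a x`. -/
noncomputable def l1Norm {X : Type*} (a : X →₀ ℕ) : ℕ := a.sum fun _ n => n

/-- ℓ¹-distance `‖a - b‖₁ = Σ_x |a x - b x|` (with `|a x - b x|` computed via truncated
subtraction on ℕ as `(a x - b x) + (b x - a x)`). -/
noncomputable def l1Dist {X : Type*} (a b : X →₀ ℕ) : ℕ := l1Norm ((a - b) + (b - a))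

/-- `a ∧ b`: the pointwise minimum of two ℕ-valued 0-chains. -/
noncomputable def chainMin {X : Type*} (a b : X →₀ ℕ) : X →₀ ℕ :=
  Finsupp.zipWith min (min_self 0) a b

/-- `b(a)`: the characteristic function of the support of `a`. -/
noncomputable def bChain {X : Type*} (a : X →₀ ℕ) : X →₀ ℕ :=
  Finsupp.onFinset a.support (fun x => if a x = 0 then 0 else 1)
    (fun x h => Finsupp.mem_support_iff.mpr (by intro hx; simp [hx] at h))

/-- `t(a) := a - b(a)`. -/
noncomputable def tChain {X : Type*} (a : X →₀ ℕ) : X →₀ ℕ := a - bChain a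

/-- The flow map `s₁`: `s₁(a)(x) = b(a)(x) + Σ_{y : σ y = x} t(a)(y)`. -/
noncomputable def flowStep {X : Type*} (σ : X → X) (a : X →₀ ℕ) : X →₀ ℕ :=
  bChain a + (tChain a).sum fun y n => Finsupp.single (σ y) n

lemma bChain_apply {X : Type*} (a : X →₀ ℕ) (x : X) :
    bChain a x = if a x = 0 then 0 else 1 := rfl

lemma bChain_le {X : Type*} (a : X →₀ ℕ) : bChain a ≤ a := by
  intro x
  rw [bChain_apply]
  split <;> omega

lemma bChain_add_tChain {X : Type*} (a : X →₀ ℕ) : bChain a + tChain a = a := by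
  rw [tChain, add_tsub_cancel_of_le (bChain_le a)]

lemma l1Norm_add {X : Type*} (c d : X →₀ ℕ) : l1Norm (c + d) = l1Norm c + l1Norm d := by
  simp [l1Norm, Finsupp.sum_add_index']

lemma l1Norm_mono {X : Type*} {c d : X →₀ ℕ} (h : c ≤ d) : l1Norm c ≤ l1Norm d := by
  have : d = c + (d - c) := (add_tsub_cancel_of_le h).symm
  rw [this, l1Norm_add]; omega

lemma flowStep_eq {X : Type*} (σ : X → X) (a : X →₀ ℕ) :
    flowStep σ a = bChain a + Finsupp.mapDomain σ (tChain a) := rfl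

lemma mapDomain_mono {X : Type*} (σ : X → X) {c d : X →₀ ℕ} (h : c ≤ d) :
    Finsupp.mapDomain σ c ≤ Finsupp.mapDomain σ d := by
  have hd : d = c + (d - c) := (add_tsub_cancel_of_le h).symm
  rw [hd, Finsupp.mapDomain_add]
  exact le_add_of_nonneg_right zero_le

lemma bChain_mono {X : Type*} {c d : X →₀ ℕ} (h : c ≤ d) : bChain c ≤ bChain d := by
  intro x
  rw [bChain_apply, bChain_apply]
  have := h x
  split <;> split <;> omega

lemma tChain_mono {X : Type*} {c d : X →₀ ℕ} (h : c ≤ d) : tChain c ≤ tChain d := by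
  intro x
  have := h x
  have hc : tChain c x = c x - bChain c x := rfl
  have hd : tChain d x = d x - bChain d x := rfl
  rw [hc, hd, bChain_apply, bChain_apply]
  split <;> split <;> omega

lemma flowStep_mono {X : Type*} (σ : X → X) {c d : X →₀ ℕ} (h : c ≤ d) :
    flowStep σ c ≤ flowStep σ d := by
  rw [flowStep_eq, flowStep_eq]
  exact add_le_add (bChain_mono h) (mapDomain_mono σ (tChain_mono h))

lemma l1Norm_flowStep {X : Type*} (σ : X → X) (a : X →₀ ℕ) :
    l1Norm (flowStep σ a) = l1Norm a := by
  rw [flowStep_eq, l1Norm_add]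
  have : l1Norm (Finsupp.mapDomain σ (tChain a)) = l1Norm (tChain a) := by
    unfold l1Norm
    rw [Finsupp.sum_mapDomain_index (by simp) (by simp)]
  rw [this, ← l1Norm_add, bChain_add_tChain]

lemma chainMin_apply {X : Type*} (a b : X →₀ ℕ) (x : X) :
    chainMin a b x = min (a x) (b x) := rfl

lemma chainMin_le_left {X : Type*} (a b : X →₀ ℕ) : chainMin a b ≤ a := by
  intro x; rw [chainMin_apply]; exact min_le_left _ _

lemma chainMin_le_right {X : Type*} (a b : X →₀ ℕ) : chainMin a b ≤ b := by
  intro x; rw [chainMin_apply]; exact min_le_right _ _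

lemma le_chainMin {X : Type*} {a b c : X →₀ ℕ} (h1 : c ≤ a) (h2 : c ≤ b) :
    c ≤ chainMin a b := by
  intro x; rw [chainMin_apply]; exact le_min (h1 x) (h2 x)

/-- The flow map `s₁` does not decrease the ℓ¹-norm of the pointwise minimum of two
ℕ-valued 0-chains. -/
theorem l1Norm_chainMin_le_flowStep {X : Type*} (σ : X → X) (a b : X →₀ ℕ) :
    l1Norm (chainMin a b) ≤ l1Norm (chainMin (flowStep σ a) (flowStep σ b)) := by
  calc l1Norm (chainMin a b) = l1Norm (flowStep σ (chainMin a b)) :=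
        (l1Norm_flowStep σ _).symm
    _ ≤ l1Norm (chainMin (flowStep σ a) (flowStep σ b)) :=
        l1Norm_mono (le_chainMin (flowStep_mono σ (chainMin_le_left a b))
          (flowStep_mono σ (chainMin_le_right a b)))
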